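/- arXiv:1311.5769 — 2 statements merged into one kernel-verified Lean document; each statement's English description precedes it below -/
import Mathlib

section
/- Let a, b, c be nonnegative reals with a + b + c = 1 and a > 0. For n ≥ 2 let P_{n,0} be the total weight of step sequences of length n−1 which, started at height 1, have height ≥ 1 after each of the first n−2 steps and height 0 after the final step, and set P_{0,0} = P_{1,0} = 0. Then for every real t with 0 < t and t·(b + 2·√(a·c)) < 1, the series ∑_{n=0}^∞ P_{n,0}·t^n converges (HasSum) to (1 − b·t − √((b·t − 1)² − 4·a·c·t²)) / (2·a). -/
open Finset

/-- The step sequences of length `L`: functions `Fin L → ℤ` with every value in `{1, 0, -1}`. -/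
def stepSeqs (L : ℕ) : Finset (Fin L → ℤ) :=
  Fintype.piFinset fun _ => ({1, 0, -1} : Finset ℤ)

/-- The weight of a step sequence: `a ^ (#up steps) * b ^ (#flat steps) * c ^ (#down steps)`. -/
def seqWeight (a b c : ℝ) {L : ℕ} (s : Fin L → ℤ) : ℝ :=
  a ^ (Finset.univ.filter (fun i => s i = 1)).card *
    b ^ (Finset.univ.filter (fun i => s i = 0)).card *
      c ^ (Finset.univ.filter (fun i => s i = -1)).card

/-- The height of a step sequence after `i` steps, started at height `h`. -/
def seqHeight {L : ℕ} (h : ℤ) (s : Fin L → ℤ) (i : ℕ) : ℤ :=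
  h + ∑ j ∈ Finset.univ.filter (fun j : Fin L => (j : ℕ) < i), s j

/-- `P n 0`: for `n ≥ 2`, the total weight of step sequences of length `n-1` which, started at
height `1`, have height `≥ 1` after each of the first `n-2` steps and height `0` after the final
step (ruin exactly at size `n`); `P 0 0 = P 1 0 = 0`. -/
def ruinP (a b c : ℝ) (n : ℕ) : ℝ :=
  if 2 ≤ n then
    ∑ s ∈ (stepSeqs (n - 1)).filter
        (fun s => (∀ i ≤ n - 2, 1 ≤ seqHeight 1 s i) ∧ seqHeight 1 s (n - 1) = 0),
      seqWeight a b c s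
  else 0

namespace RuinAux

lemma sum_stepSeqs_succ {m : ℕ} (f : (Fin (m+1) → ℤ) → ℝ) :
    ∑ s ∈ stepSeqs (m+1), f s
      = ∑ d ∈ ({1, 0, -1} : Finset ℤ), ∑ s ∈ stepSeqs m, f (Fin.cons d s) := by
  rw [← Finset.sum_product']
  refine Finset.sum_nbij' (fun s => (s 0, Fin.tail s))
    (fun p => (Fin.cons p.1 p.2 : Fin (m+1) → ℤ)) ?_ ?_ ?_ ?_ ?_
  · intro s hs
    simp only [stepSeqs, Fintype.mem_piFinset, Finset.mem_product] at *
    exact ⟨hs 0, fun i => hs i.succ⟩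
  · rintro ⟨d, s⟩ hp
    simp only [stepSeqs, Fintype.mem_piFinset, Finset.mem_product] at *
    intro i
    refine Fin.cases ?_ ?_ i
    · simpa using hp.1
    · intro j; simpa using hp.2 j
  · intro s _; simp [Fin.cons_self_tail]
  · rintro ⟨d, s⟩ _; simp
  · intro s _; rw [Fin.cons_self_tail]

lemma seqWeight_cons {m : ℕ} (a b c : ℝ) (d : ℤ) (hd : d ∈ ({1, 0, -1} : Finset ℤ))
    (s : Fin m → ℤ) :
    seqWeight a b c (Fin.cons d s)
      = (if d = 1 then a else if d = 0 then b else c) * seqWeight a b c s := by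
  have key : ∀ v : ℤ,
      (Finset.univ.filter (fun i : Fin (m+1) => (Fin.cons d s : Fin (m+1) → ℤ) i = v)).card
        = (if d = v then 1 else 0) + (Finset.univ.filter (fun i : Fin m => s i = v)).card := by
    intro v
    rw [Finset.card_filter, Finset.card_filter, Fin.sum_univ_succ]
    simp
  simp only [seqWeight, key]
  fin_cases hd <;> norm_num [pow_succ] <;> ring

lemma seqHeight_cons {m : ℕ} (h d : ℤ) (s : Fin m → ℤ) (i : ℕ) :
    seqHeight h (Fin.cons d s : Fin (m+1) → ℤ) (i + 1) = seqHeight (h + d) s i := by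
  simp only [seqHeight, Finset.sum_filter, Fin.sum_univ_succ]
  simp [add_assoc]

lemma seqHeight_zero {L : ℕ} (h : ℤ) (s : Fin L → ℤ) : seqHeight h s 0 = h := by
  simp [seqHeight]

end RuinAux
namespace RuinAux

def Q (a b c : ℝ) (h : ℤ) (m : ℕ) : ℝ :=
  ∑ s ∈ (stepSeqs m).filter
      (fun s => (∀ i < m, 1 ≤ seqHeight h s i) ∧ seqHeight h s m = 0),
    seqWeight a b c s

lemma Q_zero (a b c : ℝ) (h : ℤ) : Q a b c h 0 = if h = 0 then 1 else 0 := by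
  have hw : ∀ s : Fin 0 → ℤ, seqWeight a b c s = 1 := by
    intro s; simp [seqWeight]
  have hht : ∀ s : Fin 0 → ℤ, seqHeight h s 0 = h := by
    intro s; simp [seqHeight]
  rw [Q]
  split_ifs with h0
  · subst h0
    rw [Finset.filter_true_of_mem (fun s _ => ⟨fun i hi => absurd hi (by omega), hht s⟩)]
    rw [Finset.sum_congr rfl (fun s _ => hw s)]
    simp [Finset.sum_const, stepSeqs, Fintype.card_piFinset]
  · rw [Finset.filter_false_of_mem, Finset.sum_empty]
    rintro s - ⟨-, h2⟩
    rw [hht] at h2; exact h0 h2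

lemma Q_zero_height (a b c : ℝ) (m : ℕ) : Q a b c 0 (m + 1) = 0 := by
  rw [Q, Finset.filter_false_of_mem, Finset.sum_empty]
  rintro s - ⟨h1, -⟩
  have := h1 0 (Nat.succ_pos m)
  rw [seqHeight_zero] at this
  omega

lemma Q_rec (a b c : ℝ) (h : ℤ) (hh : 1 ≤ h) (m : ℕ) :
    Q a b c h (m + 1)
      = a * Q a b c (h + 1) m + b * Q a b c h m + c * Q a b c (h - 1) m := by
  rw [Q, Finset.sum_filter, sum_stepSeqs_succ]
  have step : ∀ d : ℤ, d ∈ ({1, 0, -1} : Finset ℤ) →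
      (∑ s ∈ stepSeqs m, if ((∀ i < m + 1, 1 ≤ seqHeight h (Fin.cons d s : Fin (m+1) → ℤ) i) ∧
          seqHeight h (Fin.cons d s : Fin (m+1) → ℤ) (m + 1) = 0)
        then seqWeight a b c (Fin.cons d s : Fin (m+1) → ℤ) else 0)
      = (if d = 1 then a else if d = 0 then b else c) * Q a b c (h + d) m := by
    intro d hd
    rw [Q, Finset.sum_filter, Finset.mul_sum]
    refine Finset.sum_congr rfl fun s hs => ?_
    have hcond : ((∀ i < m + 1, 1 ≤ seqHeight h (Fin.cons d s : Fin (m+1) → ℤ) i) ∧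
          seqHeight h (Fin.cons d s : Fin (m+1) → ℤ) (m + 1) = 0)
        ↔ ((∀ i < m, 1 ≤ seqHeight (h + d) s i) ∧ seqHeight (h + d) s m = 0) := by
      constructor
      · rintro ⟨hall, hend⟩
        rw [seqHeight_cons] at hend
        exact ⟨fun i hi => by have := hall (i+1) (by omega); rwa [seqHeight_cons] at this, hend⟩
      · rintro ⟨hall, hend⟩
        rw [seqHeight_cons]
        refine ⟨fun i hi => ?_, hend⟩
        cases i with
        | zero => rwa [seqHeight_zero]
        | succ i => rw [seqHeight_cons]; exact hall i (by omega)
    rw [seqWeight_cons a b c d hd s]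
    by_cases hc : ((∀ i < m, 1 ≤ seqHeight (h + d) s i) ∧ seqHeight (h + d) s m = 0)
    · rw [if_pos (hcond.mpr hc), if_pos hc]
    · rw [if_neg (fun hx => hc (hcond.mp hx)), if_neg hc, mul_zero]
  rw [Finset.sum_congr rfl step]
  have h1 : ((1:ℤ)) ∉ ({0, -1} : Finset ℤ) := by decide
  have h2 : ((0:ℤ)) ∉ ({-1} : Finset ℤ) := by decide
  rw [show ({1, 0, -1} : Finset ℤ) = insert 1 (insert 0 {-1}) from rfl,
    Finset.sum_insert h1, Finset.sum_insert h2, Finset.sum_singleton]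
  norm_num [show h + -1 = h - 1 from by ring]
  ring

lemma ruinP_eq_Q (a b c : ℝ) (m : ℕ) : ruinP a b c (m + 1) = Q a b c 1 m := by
  cases m with
  | zero =>
    rw [ruinP, if_neg (by omega), Q_zero]
    norm_num
  | succ m =>
    rw [ruinP, if_pos (by omega), Q]
    congr 1
    apply Finset.filter_congr
    intro s _
    constructor
    · rintro ⟨h1, h2⟩
      exact ⟨fun i hi => h1 i (by omega), by simpa using h2⟩
    · rintro ⟨h1, h2⟩
      exact ⟨fun i hi => h1 i (by omega), by simpa using h2⟩

end RuinAux
namespace RuinAux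

lemma sum_steps {m : ℕ} (s : Fin m → ℤ) (hs : s ∈ stepSeqs m) :
    ∑ i, s i = ((Finset.univ.filter (fun i => s i = 1)).card : ℤ)
      - ((Finset.univ.filter (fun i => s i = -1)).card : ℤ) := by
  have key : ∀ i : Fin m, s i = 1 ∨ s i = 0 ∨ s i = -1 := by
    intro i
    have := Fintype.mem_piFinset.mp hs i
    simpa using this
  rw [← Finset.sum_filter_add_sum_filter_not Finset.univ (fun i => s i = 1) s,
      ← Finset.sum_filter_add_sum_filter_not (Finset.univ.filter (fun i => ¬ s i = 1))
        (fun i => s i = 0) s, Finset.filter_filter, Finset.filter_filter]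
  have e1 : ∑ i ∈ Finset.univ.filter (fun i => s i = 1), s i
      = ((Finset.univ.filter (fun i => s i = 1)).card : ℤ) := by
    rw [Finset.sum_congr rfl (fun i hi => (Finset.mem_filter.mp hi).2)]; simp
  have e2 : ∑ i ∈ Finset.univ.filter (fun i => ¬ s i = 1 ∧ s i = 0), s i = 0 :=
    Finset.sum_eq_zero fun i hi => (Finset.mem_filter.mp hi).2.2
  have e3 : Finset.univ.filter (fun i => ¬ s i = 1 ∧ ¬ s i = 0)
      = Finset.univ.filter (fun i => s i = -1) := by
    apply Finset.filter_congr
    intro i _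
    rcases key i with h | h | h <;> simp [h]
  have e4 : ∑ i ∈ Finset.univ.filter (fun i => s i = -1), s i
      = -((Finset.univ.filter (fun i => s i = -1)).card : ℤ) := by
    rw [Finset.sum_congr rfl (fun i hi => (Finset.mem_filter.mp hi).2)]; simp
  rw [e1, e2, e3, e4]
  ring

lemma card_ne_zero {m : ℕ} (s : Fin m → ℤ) (hs : s ∈ stepSeqs m) :
    (Finset.univ.filter (fun i => ¬ s i = 0)).card
      = (Finset.univ.filter (fun i => s i = 1)).card
        + (Finset.univ.filter (fun i => s i = -1)).card := by
  have key : ∀ i : Fin m, s i = 1 ∨ s i = 0 ∨ s i = -1 := by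
    intro i
    have := Fintype.mem_piFinset.mp hs i
    simpa using this
  rw [← Finset.card_union_of_disjoint]
  · congr 1
    ext i
    simp only [Finset.mem_filter, Finset.mem_union, Finset.mem_univ, true_and]
    rcases key i with h | h | h <;> simp [h]
  · rw [Finset.disjoint_filter]
    intro i _ h1 h2
    rw [h1] at h2; exact absurd h2 (by decide)

end RuinAux
namespace RuinAux

lemma seqWeight_nonneg {m : ℕ} (a b c : ℝ) (ha : 0 ≤ a) (hb : 0 ≤ b) (hc : 0 ≤ c)
    (s : Fin m → ℤ) : 0 ≤ seqWeight a b c s :=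
  mul_nonneg (mul_nonneg (pow_nonneg ha _) (pow_nonneg hb _)) (pow_nonneg hc _)

lemma Q_nonneg (a b c : ℝ) (ha : 0 ≤ a) (hb : 0 ≤ b) (hc : 0 ≤ c) (h : ℤ) (m : ℕ) :
    0 ≤ Q a b c h m :=
  Finset.sum_nonneg fun s _ => seqWeight_nonneg a b c ha hb hc s

lemma Q_le (a b c : ℝ) (ha : 0 < a) (hb : 0 ≤ b) (hc : 0 ≤ c) (h m : ℕ) :
    Q a b c (h : ℤ) m
      ≤ Real.sqrt (c / a) ^ h * (b + 2 * Real.sqrt (a * c)) ^ m := by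
  set γ := Real.sqrt (c / a) with hγdef
  set β := Real.sqrt (a * c) with hβdef
  have hγ : 0 ≤ γ := Real.sqrt_nonneg _
  have hβ : 0 ≤ β := Real.sqrt_nonneg _
  have hgb : γ * β = c := by
    rw [hγdef, hβdef, ← Real.sqrt_mul (div_nonneg hc ha.le)]
    rw [show c / a * (a * c) = c ^ 2 * (a / a) by ring, div_self ha.ne', mul_one]
    exact Real.sqrt_sq hc
  have hβ2 : β ^ 2 = a * c := Real.sq_sqrt (mul_nonneg ha.le hc)
  have hweight : ∀ s ∈ (stepSeqs m).filter
      (fun s => (∀ i < m, 1 ≤ seqHeight (h : ℤ) s i) ∧ seqHeight (h : ℤ) s m = 0),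
      seqWeight a b c s = γ ^ h * ∏ i, (if s i = 0 then b else β) := by
    intro s hs
    rw [Finset.mem_filter] at hs
    obtain ⟨hmem, -, hend⟩ := hs
    set u := (Finset.univ.filter (fun i => s i = 1)).card with hu
    set z := (Finset.univ.filter (fun i => s i = 0)).card with hz
    set d := (Finset.univ.filter (fun i => s i = -1)).card with hd
    have hsum : ∑ i, s i = -(h : ℤ) := by
      have : seqHeight (h : ℤ) s m = (h : ℤ) + ∑ i, s i := by
        rw [seqHeight]
        congr 1
        rw [Finset.filter_true_of_mem (fun i _ => i.isLt)]
      rw [this] at hend; omega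
    have hdu : d = u + h := by
      have := sum_steps s hmem
      rw [hsum] at this
      omega
    have hprod : ∏ i, (if s i = 0 then b else β) = b ^ z * β ^ (u + d) := by
      rw [← Finset.prod_filter_mul_prod_filter_not Finset.univ (fun i => s i = 0)]
      congr 1
      · rw [Finset.prod_congr rfl (fun i hi => if_pos (Finset.mem_filter.mp hi).2)]
        simp [hz]
      · rw [Finset.prod_congr rfl (fun i hi => if_neg (Finset.mem_filter.mp hi).2)]
        rw [Finset.prod_const, card_ne_zero s hmem]
    rw [seqWeight, hprod, ← hu, ← hz, ← hd, hdu]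
    have e : γ ^ h * β ^ (u + (u + h)) = c ^ h * (a * c) ^ u := by
      rw [show u + (u + h) = h + 2 * u by omega, pow_add, pow_mul, hβ2,
        ← mul_assoc, ← mul_pow, hgb]
    calc a ^ u * b ^ z * c ^ (u + h) = b ^ z * (c ^ h * (a * c) ^ u) := by
          rw [pow_add, mul_pow]; ring
      _ = γ ^ h * (b ^ z * β ^ (u + (u + h))) := by rw [← e]; ring
  rw [Q, Finset.sum_congr rfl hweight, ← Finset.mul_sum]
  have hle : ∑ s ∈ (stepSeqs m).filter
      (fun s => (∀ i < m, 1 ≤ seqHeight (h : ℤ) s i) ∧ seqHeight (h : ℤ) s m = 0),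
        ∏ i, (if s i = 0 then b else β)
      ≤ ∑ s ∈ stepSeqs m, ∏ i, (if s i = 0 then b else β) := by
    apply Finset.sum_le_sum_of_subset_of_nonneg (Finset.filter_subset _ _)
    intro s _ _
    exact Finset.prod_nonneg fun i _ => by split <;> assumption
  have htotal : ∑ s ∈ stepSeqs m, ∏ i, (if s i = 0 then b else β)
      = (b + 2 * β) ^ m := by
    rw [stepSeqs, ← Finset.prod_univ_sum (fun _ : Fin m => ({1, 0, -1} : Finset ℤ))
      (fun _ x => if x = 0 then b else β)]
    rw [Finset.prod_congr rfl (fun i _ => by norm_num; ring : ∀ i ∈ Finset.univ,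
      (∑ x ∈ ({1, 0, -1} : Finset ℤ), if x = 0 then b else β) = b + 2 * β)]
    simp
  calc γ ^ h * ∑ s ∈ (stepSeqs m).filter _, ∏ i, (if s i = 0 then b else β)
      ≤ γ ^ h * ∑ s ∈ stepSeqs m, ∏ i, (if s i = 0 then b else β) := by
        exact mul_le_mul_of_nonneg_left hle (pow_nonneg hγ _)
    _ = γ ^ h * (b + 2 * β) ^ m := by rw [htotal]

end RuinAux

open RuinAux in
set_option maxHeartbeats 1000000 in
/-- the gambler's-ruin generating function
`G(t) = ∑_n P_{n,0} t^n = (1 - b t - √((b t - 1)² - 4 a c t²)) / (2 a)`. -/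
theorem ruin_generating_function (a b c : ℝ)
    (ha : 0 ≤ a) (hb : 0 ≤ b) (hc : 0 ≤ c) (habc : a + b + c = 1) (ha' : 0 < a)
    (t : ℝ) (ht : 0 < t) (ht1 : t * (b + 2 * Real.sqrt (a * c)) < 1) :
    HasSum (fun n : ℕ => ruinP a b c n * t ^ n)
      ((1 - b * t - Real.sqrt ((b * t - 1) ^ 2 - 4 * a * c * t ^ 2)) / (2 * a)) := by
  classical
  set β := Real.sqrt (a * c) with hβdef
  set γ := Real.sqrt (c / a) with hγdef
  have hβ : 0 ≤ β := Real.sqrt_nonneg _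
  have hγ : 0 ≤ γ := Real.sqrt_nonneg _
  have hβ2 : β ^ 2 = a * c := Real.sq_sqrt (mul_nonneg ha hc)
  have haγ : a * γ = β := by
    rw [hγdef, hβdef, ← Real.sqrt_sq ha, ← Real.sqrt_mul (sq_nonneg a)]
    congr 1
    field_simp
    rw [Real.sq_sqrt (sq_nonneg a)]
    ring
  set r := t * (b + 2 * β) with hrdef
  have hr0 : 0 ≤ r := mul_nonneg ht.le (by positivity)
  have hr1 : r < 1 := ht1
  -- summability
  have hQle : ∀ h m : ℕ, Q a b c (h : ℤ) m * t ^ m ≤ γ ^ h * r ^ m := by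
    intro h m
    have := mul_le_mul_of_nonneg_right (RuinAux.Q_le a b c ha' hb hc h m)
      (le_of_lt (pow_pos ht m))
    calc Q a b c (h : ℤ) m * t ^ m ≤ γ ^ h * (b + 2 * β) ^ m * t ^ m := this
      _ = γ ^ h * r ^ m := by rw [hrdef, mul_pow]; ring
  have hQt0 : ∀ h m : ℕ, 0 ≤ Q a b c (h : ℤ) m * t ^ m := fun h m =>
    mul_nonneg (RuinAux.Q_nonneg a b c ha hb hc _ _) (pow_nonneg ht.le _)
  have hgeom : Summable (fun m : ℕ => r ^ m) := summable_geometric_of_lt_one hr0 hr1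
  have hsumm : ∀ h : ℕ, Summable (fun m : ℕ => Q a b c (h : ℤ) m * t ^ m) := by
    intro h
    exact Summable.of_nonneg_of_le (hQt0 h) (hQle h) (hgeom.mul_left _)
  set F : ℕ → ℝ := fun h => ∑' m : ℕ, Q a b c (h : ℤ) m * t ^ m with hFdef
  have hF0 : F 0 = 1 := by
    show (∑' m : ℕ, Q a b c ((0:ℕ):ℤ) m * t ^ m) = 1
    rw [tsum_eq_single 0 (by
      intro m hm
      obtain ⟨m', rfl⟩ := Nat.exists_eq_succ_of_ne_zero hm
      rw [show ((0:ℕ):ℤ) = (0:ℤ) from rfl, RuinAux.Q_zero_height, zero_mul])]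
    rw [show ((0:ℕ):ℤ) = (0:ℤ) from rfl, RuinAux.Q_zero]
    norm_num
  have hFnonneg : ∀ h, 0 ≤ F h := fun h => tsum_nonneg (hQt0 h)
  have hFle : ∀ h : ℕ, F h ≤ γ ^ h * (1 - r)⁻¹ := by
    intro h
    calc F h ≤ ∑' m : ℕ, γ ^ h * r ^ m :=
          Summable.tsum_le_tsum (hQle h) (hsumm h) (hgeom.mul_left _)
      _ = γ ^ h * (1 - r)⁻¹ := by
          rw [tsum_mul_left, tsum_geometric_of_lt_one hr0 hr1]
  have hFrec : ∀ h : ℕ, F (h + 1) = t * (a * F (h + 2) + b * F (h + 1) + c * F h) := by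
    intro h
    have e1 : ((h+1:ℕ):ℤ) = (h:ℤ)+1 := by push_cast; ring
    have e2 : ((h+2:ℕ):ℤ) = (h:ℤ)+2 := by push_cast; ring
    have hs1 : Summable (fun m : ℕ => Q a b c ((h:ℤ)+1) m * t ^ m) := by
      have := hsumm (h+1); rwa [e1] at this
    have hs2 : Summable (fun m : ℕ => Q a b c ((h:ℤ)+2) m * t ^ m) := by
      have := hsumm (h+2); rwa [e2] at this
    have hrec : ∀ m : ℕ, Q a b c ((h : ℤ) + 1) (m + 1)
        = a * Q a b c ((h : ℤ) + 2) m + b * Q a b c ((h : ℤ) + 1) m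
          + c * Q a b c ((h : ℤ)) m := by
      intro m
      have h2 := RuinAux.Q_rec a b c ((h : ℤ) + 1) (by omega) m
      rwa [show (h:ℤ)+1+1 = (h:ℤ)+2 by ring, show (h:ℤ)+1-1 = (h:ℤ) by ring] at h2
    have h0 : Q a b c ((h : ℤ) + 1) 0 = 0 := by
      rw [RuinAux.Q_zero, if_neg (by omega)]
    show (∑' m : ℕ, Q a b c ((h+1:ℕ):ℤ) m * t ^ m)
        = t * (a * (∑' m : ℕ, Q a b c ((h+2:ℕ):ℤ) m * t ^ m)
          + b * (∑' m : ℕ, Q a b c ((h+1:ℕ):ℤ) m * t ^ m)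
          + c * (∑' m : ℕ, Q a b c ((h:ℕ):ℤ) m * t ^ m))
    rw [e1, e2]
    have congr1 : (fun m : ℕ => Q a b c ((h : ℤ) + 1) (m + 1) * t ^ (m + 1))
        = (fun m : ℕ => t * a * (Q a b c ((h : ℤ) + 2) m * t ^ m)
            + (t * b * (Q a b c ((h : ℤ) + 1) m * t ^ m)
              + t * c * (Q a b c ((h : ℤ)) m * t ^ m))) := by
      funext m
      rw [hrec m, pow_succ]
      ring
    have lhs_eq : (∑' m : ℕ, Q a b c ((h:ℤ)+1) m * t ^ m)
        = t * a * (∑' m : ℕ, Q a b c ((h:ℤ)+2) m * t ^ m)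
          + (t * b * (∑' m : ℕ, Q a b c ((h:ℤ)+1) m * t ^ m)
            + t * c * (∑' m : ℕ, Q a b c ((h:ℤ)) m * t ^ m)) := by
      conv_lhs => rw [Summable.tsum_eq_zero_add hs1]
      rw [h0, zero_mul, zero_add, congr1,
        Summable.tsum_add (hs2.mul_left _) ((hs1.mul_left _).add ((hsumm h).mul_left _)),
        Summable.tsum_add (hs1.mul_left _) ((hsumm h).mul_left _),
        tsum_mul_left, tsum_mul_left, tsum_mul_left]
    linear_combination lhs_eq
  -- root analysis
  have hbtr : b * t ≤ r := by
    rw [hrdef]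
    nlinarith [mul_nonneg ht.le hβ]
  have hX : 0 < 1 - b * t := by linarith
  set disc := (1 - b * t) ^ 2 - 4 * (a * t) * (c * t) with hdiscdef
  have hdisc : 0 < disc := by
    have hfact : disc = (1 - r) * ((1 - r) + 4 * (t * β)) := by
      rw [hdiscdef, hrdef]
      linear_combination (4 * t ^ 2) * hβ2
    rw [hfact]
    have h4 : 0 ≤ t * β := mul_nonneg ht.le hβ
    nlinarith
  set s := Real.sqrt disc with hsdef
  have hs0 : 0 < s := Real.sqrt_pos.mpr hdisc
  have hs2 : s ^ 2 = disc := Real.sq_sqrt hdisc.le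
  have hsX : s ≤ 1 - b * t := by
    have h1 : disc ≤ (1 - b * t) ^ 2 := by
      rw [hdiscdef]
      nlinarith [mul_nonneg (mul_nonneg ha ht.le) (mul_nonneg hc ht.le)]
    calc s = Real.sqrt disc := hsdef
      _ ≤ Real.sqrt ((1 - b * t) ^ 2) := Real.sqrt_le_sqrt h1
      _ = 1 - b * t := Real.sqrt_sq hX.le
  have hat : 0 < 2 * (a * t) := by positivity
  set lp := (1 - b * t + s) / (2 * (a * t)) with hlp
  set lm := (1 - b * t - s) / (2 * (a * t)) with hlm
  have hlm0 : 0 ≤ lm := div_nonneg (by linarith) hat.le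
  have hlmp : lm < lp := by
    rw [hlp, hlm]
    exact (div_lt_div_iff_of_pos_right hat).mpr (by linarith)
  have hlp0 : 0 < lp := lt_of_le_of_lt hlm0 hlmp
  have rootp : (a * t) * lp ^ 2 - (1 - b * t) * lp + c * t = 0 := by
    rw [hlp]
    field_simp
    ring_nf
    linear_combination hs2
  have rootm : (a * t) * lm ^ 2 - (1 - b * t) * lm + c * t = 0 := by
    rw [hlm]
    field_simp
    ring_nf
    linear_combination hs2
  have hat' : a * t ≠ 0 := by positivity
  have hlpm : lp - lm ≠ 0 := sub_ne_zero.mpr (ne_of_gt hlmp)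
  set Ac := (F 1 - lm) / (lp - lm) with hAcdef
  set Bc := (lp - F 1) / (lp - lm) with hBcdef
  clear_value β γ r F disc s lp lm Ac Bc
  have key : ∀ h : ℕ, F h = Ac * lp ^ h + Bc * lm ^ h ∧
      F (h + 1) = Ac * lp ^ (h + 1) + Bc * lm ^ (h + 1) := by
    intro h
    induction h with
    | zero =>
      constructor
      · rw [hF0, hAcdef, hBcdef, pow_zero, pow_zero]
        field_simp
        ring
      · rw [hAcdef, hBcdef, pow_one, pow_one]
        field_simp
        ring
    | succ h ih =>
      refine ⟨ih.2, ?_⟩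
      have hfr := hFrec h
      have hAt : (a * t) * F (h + 2) = (1 - b * t) * F (h + 1) - (c * t) * F h := by
        linear_combination (-1 : ℝ) * hfr
      have hlam : ∀ lam : ℝ, (a * t) * lam ^ 2 - (1 - b * t) * lam + c * t = 0 →
          (a * t) * lam ^ (h + 2) = (1 - b * t) * lam ^ (h + 1) - (c * t) * lam ^ h := by
        intro lam hroot
        linear_combination (lam ^ h) * hroot
      have hAt2 : (a * t) * (Ac * lp ^ (h + 2) + Bc * lm ^ (h + 2))
          = (1 - b * t) * F (h + 1) - (c * t) * F h := by
        rw [ih.1, ih.2]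
        linear_combination Ac * (hlam lp rootp) + Bc * (hlam lm rootm)
      exact mul_left_cancel₀ hat' (hAt.trans hAt2.symm)
  -- show Ac = 0 via growth
  have hγlp : γ < lp := by
    rw [hlp, lt_div_iff₀ hat]
    have h2tβ : γ * (2 * (a * t)) = 2 * t * β := by
      rw [← haγ]; ring
    rw [h2tβ]
    have : 2 * t * β ≤ r := by rw [hrdef]; nlinarith [mul_nonneg ht.le hb]
    linarith
  have hγlp' : 0 ≤ γ / lp ∧ γ / lp < 1 := by
    constructor
    · exact div_nonneg hγ hlp0.le
    · rw [div_lt_one hlp0]; exact hγlp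
  have hlmlp : 0 ≤ lm / lp ∧ lm / lp < 1 := by
    constructor
    · exact div_nonneg hlm0 hlp0.le
    · rw [div_lt_one hlp0]; exact hlmp
  have hexp : ∀ h : ℕ, Ac = F h / lp ^ h - Bc * (lm / lp) ^ h := by
    intro h
    have hlppow : (0:ℝ) < lp ^ h := pow_pos hlp0 h
    have hk := (key h).1
    rw [eq_sub_iff_add_eq, div_pow, ← mul_div_assoc,
      add_div' _ _ _ (ne_of_gt hlppow),
      div_eq_div_iff (ne_of_gt hlppow) (ne_of_gt hlppow)]
    linear_combination (-(lp ^ h)) * hk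
  have htend1 : Filter.Tendsto (fun h : ℕ => F h / lp ^ h) Filter.atTop (nhds 0) := by
    apply tendsto_of_tendsto_of_tendsto_of_le_of_le (g := fun _ => (0:ℝ))
      (h := fun h : ℕ => (γ / lp) ^ h * (1 - r)⁻¹)
    · exact tendsto_const_nhds
    · have h5 := (tendsto_pow_atTop_nhds_zero_of_lt_one hγlp'.1 hγlp'.2).mul_const (1 - r)⁻¹
      rw [zero_mul] at h5
      exact h5
    · intro h
      exact div_nonneg (hFnonneg h) (pow_pos hlp0 h).le
    · intro h
      rw [div_le_iff₀ (pow_pos hlp0 h)]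
      calc F h ≤ γ ^ h * (1 - r)⁻¹ := hFle h
        _ = (γ / lp) ^ h * (1 - r)⁻¹ * lp ^ h := by
            rw [div_pow, div_mul_eq_mul_div, div_mul_eq_mul_div,
              eq_div_iff (ne_of_gt (pow_pos hlp0 h))]
  have htend2 : Filter.Tendsto (fun h : ℕ => Bc * (lm / lp) ^ h) Filter.atTop (nhds 0) := by
    have h5 := (tendsto_pow_atTop_nhds_zero_of_lt_one hlmlp.1 hlmlp.2).const_mul Bc
    rw [mul_zero] at h5
    exact h5
  have hAc0 : Ac = 0 := by
    have htend : Filter.Tendsto (fun _ : ℕ => Ac) Filter.atTop (nhds 0) := by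
      have heq : (fun _ : ℕ => Ac) = fun h : ℕ => F h / lp ^ h - Bc * (lm / lp) ^ h :=
        funext fun h => hexp h
      rw [heq]
      have h6 := htend1.sub htend2
      rw [sub_zero] at h6
      exact h6
    exact tendsto_nhds_unique tendsto_const_nhds htend
  have hBc1 : Bc = 1 := by
    have := (key 0).1
    rw [hF0, hAc0, pow_zero, pow_zero] at this
    linarith
  have hF1 : F 1 = lm := by
    have := (key 0).2
    rw [hAc0, hBc1, pow_one, pow_one] at this
    linarith [this]
  -- final assembly
  have hhasQ : HasSum (fun m : ℕ => Q a b c ((1:ℕ):ℤ) m * t ^ m) (F 1) := by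
    rw [hFdef]
    exact (hsumm 1).hasSum
  have heqf : (fun m : ℕ => ruinP a b c (m + 1) * t ^ (m + 1))
      = fun m : ℕ => (Q a b c ((1:ℕ):ℤ) m * t ^ m) * t := by
    funext m
    rw [RuinAux.ruinP_eq_Q, pow_succ, Nat.cast_one]
    ring
  have hhas2 : HasSum (fun m : ℕ => ruinP a b c (m + 1) * t ^ (m + 1)) (F 1 * t) := by
    rw [heqf]
    exact hhasQ.mul_right t
  have hfinal := (hasSum_nat_add_iff (f := fun n : ℕ => ruinP a b c n * t ^ n) 1).mp hhas2
  have hruin0 : ruinP a b c 0 * t ^ 0 = 0 := by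
    have : ruinP a b c 0 = 0 := by
      unfold ruinP
      rw [if_neg (by omega)]
    rw [this, zero_mul]
  rw [Finset.range_one, Finset.sum_singleton, hruin0, add_zero] at hfinal
  have hval : F 1 * t = (1 - b * t - Real.sqrt ((b * t - 1) ^ 2 - 4 * a * c * t ^ 2)) / (2 * a) := by
    rw [hF1, hlm]
    rw [show (b * t - 1) ^ 2 - 4 * a * c * t ^ 2 = disc by rw [hdiscdef]; ring, ← hsdef]
    field_simp
  rwa [hval] at hfinal
end

section
/- Let a, b, c be strictly positive reals with a + b + c = 1. For n ≥ 2 let P_{n,0} be the total weight of step sequences of length n−1 which, started at height 1, have height ≥ 1 after each of the first n−2 steps and height 0 after the final step, and set P_{0,0} = P_{1,0} = 0. Then ∑_{n=0}^∞ P_{n,0} = min(a, c)/a; that is, the total ruin probability equals 1 when a ≤ c and equals c/a when a > c. -/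
open Finset Filter

noncomputable def stepw (a b c : ℝ) (x : ℤ) : ℝ := if x = 1 then a else if x = 0 then b else c

lemma card_filter_cons {N : ℕ} (x : ℤ) (u : Fin N → ℤ) (v : ℤ) :
    (Finset.univ.filter (fun i : Fin (N+1) => (Fin.cons x u : Fin (N+1) → ℤ) i = v)).card
      = (if x = v then 1 else 0) + (Finset.univ.filter (fun i => u i = v)).card := by
  rw [Finset.card_filter, Finset.card_filter, Fin.sum_univ_succ]
  simp [Fin.cons_zero, Fin.cons_succ]

lemma card_filter_snoc {N : ℕ} (x : ℤ) (u : Fin N → ℤ) (v : ℤ) :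
    (Finset.univ.filter (fun i : Fin (N+1) => (Fin.snoc u x : Fin (N+1) → ℤ) i = v)).card
      = (if x = v then 1 else 0) + (Finset.univ.filter (fun i => u i = v)).card := by
  rw [Finset.card_filter, Finset.card_filter, Fin.sum_univ_castSucc]
  simp [Fin.snoc_castSucc, Fin.snoc_last, add_comm]

lemma seqWeight_cons {a b c : ℝ} {N : ℕ} {x : ℤ} (hx : x = 1 ∨ x = 0 ∨ x = -1) (u : Fin N → ℤ) :
    seqWeight a b c (Fin.cons x u) = stepw a b c x * seqWeight a b c u := by
  unfold seqWeight stepw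
  rw [card_filter_cons, card_filter_cons, card_filter_cons, pow_add, pow_add, pow_add]
  rcases hx with rfl | rfl | rfl <;> norm_num <;> ring

lemma seqWeight_snoc {a b c : ℝ} {N : ℕ} {x : ℤ} (hx : x = 1 ∨ x = 0 ∨ x = -1) (u : Fin N → ℤ) :
    seqWeight a b c (Fin.snoc u x) = stepw a b c x * seqWeight a b c u := by
  unfold seqWeight stepw
  rw [card_filter_snoc, card_filter_snoc, card_filter_snoc, pow_add, pow_add, pow_add]
  rcases hx with rfl | rfl | rfl <;> norm_num <;> ring

lemma seqHeight_zero {L : ℕ} (h : ℤ) (s : Fin L → ℤ) : seqHeight h s 0 = h := by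
  simp [seqHeight]

lemma seqHeight_cons_succ {N : ℕ} (h x : ℤ) (u : Fin N → ℤ) (i : ℕ) :
    seqHeight h (Fin.cons x u) (i+1) = seqHeight (h + x) u i := by
  unfold seqHeight
  rw [Finset.sum_filter, Finset.sum_filter, Fin.sum_univ_succ]
  simp [Nat.succ_lt_succ_iff, add_assoc]

lemma seqHeight_snoc_of_le {N : ℕ} (h x : ℤ) (u : Fin N → ℤ) {i : ℕ} (hi : i ≤ N) :
    seqHeight h (Fin.snoc u x) i = seqHeight h u i := by
  unfold seqHeight
  rw [Finset.sum_filter, Finset.sum_filter, Fin.sum_univ_castSucc]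
  have h1 : ¬ (N < i) := by omega
  simp [Fin.val_last, h1]

lemma seqHeight_snoc_last {N : ℕ} (h x : ℤ) (u : Fin N → ℤ) :
    seqHeight h (Fin.snoc u x) (N+1) = seqHeight h u N + x := by
  unfold seqHeight
  rw [Finset.sum_filter, Finset.sum_filter, Fin.sum_univ_castSucc]
  have h1 : ∀ j : Fin N, (j : ℕ) < N + 1 := fun j => by omega
  have h2 : ((Fin.last N : ℕ) < N + 1) := by simp only [Fin.val_last]; omega
  simp only [Fin.snoc_castSucc, Fin.snoc_last, Fin.coe_castSucc, h1, h2, if_true,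
    fun j : Fin N => j.2, add_assoc]

lemma seqHeight_succ {N : ℕ} (h : ℤ) (s : Fin N → ℤ) {i : ℕ} (hi : i < N) :
    seqHeight h s (i+1) = seqHeight h s i + s ⟨i, hi⟩ := by
  unfold seqHeight
  have hkey : (Finset.univ.filter (fun j : Fin N => (j : ℕ) < i + 1))
      = insert ⟨i, hi⟩ (Finset.univ.filter (fun j : Fin N => (j : ℕ) < i)) := by
    ext j
    simp only [Finset.mem_filter, Finset.mem_univ, true_and, Finset.mem_insert]
    constructor
    · intro hj
      rcases Nat.lt_succ_iff_lt_or_eq.mp hj with hj | hj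
      · exact Or.inr hj
      · exact Or.inl (Fin.ext hj)
    · rintro (rfl | hj)
      · simp
      · omega
  rw [hkey, Finset.sum_insert (by simp)]
  ring

lemma mem_stepSeqs {L : ℕ} {s : Fin L → ℤ} (hs : s ∈ stepSeqs L) (i : Fin L) :
    s i = 1 ∨ s i = 0 ∨ s i = -1 := by
  simpa [stepSeqs, Fintype.mem_piFinset] using
    (by simpa [stepSeqs, Fintype.mem_piFinset] using hs : ∀ j, s j ∈ ({1,0,-1}:Finset ℤ)) i

lemma sum_stepSeqs_cons {N : ℕ} (f : (Fin (N+1) → ℤ) → ℝ) :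
    ∑ s ∈ stepSeqs (N+1), f s
      = ∑ x ∈ ({1,0,-1} : Finset ℤ), ∑ u ∈ stepSeqs N, f (Fin.cons x u) := by
  rw [← Finset.sum_product']
  refine Finset.sum_nbij' (fun s => (s 0, Fin.tail s)) (fun p => Fin.cons p.1 p.2) ?_ ?_ ?_ ?_ ?_
  · intro s hs
    have h2 := mem_stepSeqs hs
    simp only [Finset.mem_product]
    constructor
    · simpa using h2 0
    · simp only [stepSeqs, Fintype.mem_piFinset]
      intro i; simpa [Fin.tail] using h2 i.succ
  · rintro ⟨x, u⟩ hp
    simp only [Finset.mem_product] at hp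
    simp only [stepSeqs, Fintype.mem_piFinset]
    intro i
    rcases Fin.eq_zero_or_eq_succ i with rfl | ⟨j, rfl⟩
    · simpa using hp.1
    · simpa [stepSeqs, Fintype.mem_piFinset] using
        (by simpa [stepSeqs, Fintype.mem_piFinset] using hp.2 : ∀ k, u k ∈ ({1,0,-1}:Finset ℤ)) j
  · intro s _; simp [Fin.cons_self_tail]
  · rintro ⟨x, u⟩ _; simp
  · intro s _; rw [Fin.cons_self_tail]

lemma sum_stepSeqs_snoc {N : ℕ} (f : (Fin (N+1) → ℤ) → ℝ) :
    ∑ s ∈ stepSeqs (N+1), f s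
      = ∑ x ∈ ({1,0,-1} : Finset ℤ), ∑ u ∈ stepSeqs N, f (Fin.snoc u x) := by
  rw [← Finset.sum_product']
  refine Finset.sum_nbij' (fun s => (s (Fin.last N), Fin.init s)) (fun p => Fin.snoc p.2 p.1) ?_ ?_ ?_ ?_ ?_
  · intro s hs
    have h2 := mem_stepSeqs hs
    simp only [Finset.mem_product]
    constructor
    · simpa using h2 _
    · simp only [stepSeqs, Fintype.mem_piFinset]
      intro i; simpa [Fin.init] using h2 i.castSucc
  · rintro ⟨x, u⟩ hp
    simp only [Finset.mem_product] at hp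
    have h2 : ∀ k, u k = 1 ∨ u k = 0 ∨ u k = -1 := by
      intro k
      simpa [stepSeqs, Fintype.mem_piFinset] using
        (by simpa [stepSeqs, Fintype.mem_piFinset] using hp.2 : ∀ k, u k ∈ ({1,0,-1}:Finset ℤ)) k
    simp only [stepSeqs, Fintype.mem_piFinset]
    intro i
    rcases Fin.eq_castSucc_or_eq_last i with ⟨j, rfl⟩ | rfl
    · simpa using h2 j
    · simpa using hp.1
  · intro s _; simp [Fin.snoc_init_self]
  · rintro ⟨x, u⟩ _; simp
  · intro s _; rw [Fin.snoc_init_self]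

lemma seqWeight_nonneg {a b c : ℝ} (ha : 0 ≤ a) (hb : 0 ≤ b) (hc : 0 ≤ c) {L : ℕ}
    (s : Fin L → ℤ) : 0 ≤ seqWeight a b c s := by
  unfold seqWeight; positivity

lemma stepw_nonneg {a b c : ℝ} (ha : 0 ≤ a) (hb : 0 ≤ b) (hc : 0 ≤ c) (x : ℤ) :
    0 ≤ stepw a b c x := by
  unfold stepw; split <;> [skip; split] <;> assumption

lemma sum_stepw (a b c : ℝ) : ∑ x ∈ ({1,0,-1} : Finset ℤ), stepw a b c x = a + b + c := by
  rw [show ({1,0,-1} : Finset ℤ) = {1} ∪ {0} ∪ {-1} by rfl]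
  rw [Finset.sum_union (by decide), Finset.sum_union (by decide)]
  simp [stepw]

lemma total_weight (a b c : ℝ) : ∀ N : ℕ, ∑ s ∈ stepSeqs N, seqWeight a b c s = (a+b+c)^N := by
  intro N
  induction N with
  | zero =>
    rw [pow_zero]
    have h1 : ∀ s ∈ stepSeqs 0, seqWeight a b c s = 1 := by
      intro s _
      simp [seqWeight]
    rw [Finset.sum_congr rfl h1, Finset.sum_const]
    rw [show stepSeqs 0 = Fintype.piFinset (fun _ : Fin 0 => ({1,0,-1} : Finset ℤ)) from rfl, Fintype.card_piFinset]
    simp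
  | succ N ih =>
    rw [sum_stepSeqs_cons]
    have : ∀ x ∈ ({1,0,-1} : Finset ℤ), ∑ u ∈ stepSeqs N, seqWeight a b c (Fin.cons x u)
        = stepw a b c x * (a+b+c)^N := by
      intro x hx
      have hx' : x = 1 ∨ x = 0 ∨ x = -1 := by simpa using hx
      rw [← ih, Finset.mul_sum]
      exact Finset.sum_congr rfl fun u _ => seqWeight_cons hx' u
    rw [Finset.sum_congr rfl this, ← Finset.sum_mul, sum_stepw, pow_succ]
    ring

open scoped Classical

/-- probability of hitting 0 within N steps, starting from h -/
noncomputable def ruinU (a b c : ℝ) (h : ℤ) (N : ℕ) : ℝ :=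
  ∑ s ∈ (stepSeqs N).filter (fun s => ∃ i ≤ N, seqHeight h s i = 0), seqWeight a b c s

lemma ruinU_nonneg {a b c : ℝ} (ha : 0 ≤ a) (hb : 0 ≤ b) (hc : 0 ≤ c) (h : ℤ) (N : ℕ) :
    0 ≤ ruinU a b c h N :=
  Finset.sum_nonneg fun s _ => seqWeight_nonneg ha hb hc s

lemma ruinU_le_one {a b c : ℝ} (ha : 0 ≤ a) (hb : 0 ≤ b) (hc : 0 ≤ c) (habc : a + b + c = 1)
    (h : ℤ) (N : ℕ) : ruinU a b c h N ≤ 1 := by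
  calc ruinU a b c h N ≤ ∑ s ∈ stepSeqs N, seqWeight a b c s :=
        Finset.sum_le_sum_of_subset_of_nonneg (Finset.filter_subset _ (stepSeqs N))
          (fun s _ _ => seqWeight_nonneg ha hb hc s)
  _ = 1 := by rw [total_weight, habc, one_pow]

lemma ruinU_zero {a b c : ℝ} (habc : a + b + c = 1) (N : ℕ) : ruinU a b c 0 N = 1 := by
  unfold ruinU
  rw [Finset.filter_true_of_mem (fun s _ => ⟨0, Nat.zero_le N, seqHeight_zero 0 s⟩)]
  rw [total_weight, habc, one_pow]

lemma ruinU_zero_steps {a b c : ℝ} {h : ℤ} (hh : h ≠ 0) : ruinU a b c h 0 = 0 := by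
  unfold ruinU
  rw [Finset.sum_filter]
  apply Finset.sum_eq_zero
  intro s _
  rw [if_neg]
  rintro ⟨i, hi, he⟩
  rw [Nat.le_zero] at hi
  subst hi
  rw [seqHeight_zero] at he
  exact hh he

lemma ruinU_rec' {a b c : ℝ} {h : ℤ} (hh : h ≠ 0) (N : ℕ) :
    ruinU a b c h (N+1)
      = ∑ x ∈ ({1,0,-1} : Finset ℤ), stepw a b c x * ruinU a b c (h+x) N := by
  conv_lhs => rw [ruinU]
  rw [Finset.sum_filter, sum_stepSeqs_cons]
  refine Finset.sum_congr rfl ?_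
  intro x hx
  have hx' : x = 1 ∨ x = 0 ∨ x = -1 := by simpa using hx
  rw [ruinU, Finset.sum_filter, Finset.mul_sum]
  refine Finset.sum_congr rfl ?_
  intro u _
  have hiff : (∃ i ≤ N+1, seqHeight h (Fin.cons x u) i = 0)
      ↔ (∃ i ≤ N, seqHeight (h+x) u i = 0) := by
    constructor
    · rintro ⟨i, hi, he⟩
      cases i with
      | zero => rw [seqHeight_zero] at he; exact absurd he hh
      | succ i =>
        rw [seqHeight_cons_succ] at he
        exact ⟨i, by omega, he⟩
    · rintro ⟨i, hi, he⟩
      exact ⟨i+1, by omega, by rw [seqHeight_cons_succ]; exact he⟩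
  by_cases hP : ∃ i ≤ N, seqHeight (h+x) u i = 0
  · rw [if_pos (hiff.mpr hP), if_pos hP, seqWeight_cons hx']
  · rw [if_neg (fun hq => hP (hiff.mp hq)), if_neg hP, mul_zero]

lemma ruinU_rec {a b c : ℝ} {h : ℤ} (hh : h ≠ 0) (N : ℕ) :
    ruinU a b c h (N+1)
      = a * ruinU a b c (h+1) N + b * ruinU a b c h N + c * ruinU a b c (h-1) N := by
  rw [ruinU_rec' hh]
  rw [show ({1,0,-1} : Finset ℤ) = {1} ∪ {0} ∪ {-1} from rfl]
  rw [Finset.sum_union (by decide), Finset.sum_union (by decide)]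
  simp only [Finset.sum_singleton, stepw]
  rw [show h + (0:ℤ) = h by ring, show h + (-1:ℤ) = h - 1 by ring]
  norm_num

lemma ruinU_mono {a b c : ℝ} (ha : 0 ≤ a) (hb : 0 ≤ b) (hc : 0 ≤ c) (habc : a + b + c = 1) :
    ∀ N : ℕ, ∀ h : ℤ, 0 ≤ h → ruinU a b c h N ≤ ruinU a b c h (N+1) := by
  intro N
  induction N with
  | zero =>
    intro h h0
    rcases eq_or_lt_of_le h0 with rfl | hpos
    · rw [ruinU_zero habc, ruinU_zero habc]
    · rw [ruinU_zero_steps (by omega)]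
      exact ruinU_nonneg ha hb hc _ _
  | succ N ih =>
    intro h h0
    rcases eq_or_lt_of_le h0 with rfl | hpos
    · rw [ruinU_zero habc, ruinU_zero habc]
    · have hh : h ≠ 0 := by omega
      rw [ruinU_rec hh, ruinU_rec hh]
      have t1 := ih (h+1) (by omega)
      have t2 := ih h h0
      have t3 := ih (h-1) (by omega)
      have := mul_le_mul_of_nonneg_left t1 ha
      have := mul_le_mul_of_nonneg_left t2 hb
      have := mul_le_mul_of_nonneg_left t3 hc
      linarith

lemma ruinU_le_q {a b c : ℝ} (ha : 0 < a) (hb : 0 ≤ b) (hc : 0 ≤ c) (habc : a + b + c = 1) :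
    ∀ N : ℕ, ∀ h : ℕ, ruinU a b c (h : ℤ) N ≤ (c/a)^h := by
  have hq0 : 0 ≤ c / a := div_nonneg hc ha.le
  intro N
  induction N with
  | zero =>
    intro h
    cases h with
    | zero => simp only [Nat.cast_zero]; rw [ruinU_zero habc]; norm_num
    | succ h =>
      rw [ruinU_zero_steps (by positivity)]
      positivity
  | succ N ih =>
    intro h
    cases h with
    | zero => simp only [Nat.cast_zero]; rw [ruinU_zero habc]; norm_num
    | succ k =>
      have hh : ((k+1 : ℕ) : ℤ) ≠ 0 := by positivity
      rw [ruinU_rec hh]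
      have e1 : ((k+1:ℕ):ℤ) + 1 = ((k+2:ℕ):ℤ) := by push_cast; ring
      have e2 : ((k+1:ℕ):ℤ) - 1 = ((k:ℕ):ℤ) := by push_cast; ring
      rw [e1, e2]
      have t1 := mul_le_mul_of_nonneg_left (ih (k+2)) ha.le
      have t2 := mul_le_mul_of_nonneg_left (ih (k+1)) hb
      have t3 := mul_le_mul_of_nonneg_left (ih k) hc
      have haq : a * (c/a) = c := by field_simp
      have hqrec : a * (c/a)^(k+2) + b * (c/a)^(k+1) + c * (c/a)^k = (c/a)^(k+1) := by
        linear_combination ((c/a)^(k+1) - (c/a)^k) * haq + (c/a)^(k+1) * habc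
      calc a * ruinU a b c ((k+2:ℕ):ℤ) N + b * ruinU a b c ((k+1:ℕ):ℤ) N
            + c * ruinU a b c ((k:ℕ):ℤ) N
          ≤ a * (c/a)^(k+2) + b * (c/a)^(k+1) + c * (c/a)^k := by linarith
        _ = (c/a)^(k+1) := hqrec

lemma heights_pos {N : ℕ} {t : Fin N → ℤ} (ht : t ∈ stepSeqs N)
    (hne : ∀ i ≤ N, seqHeight 1 t i ≠ 0) : ∀ i ≤ N, 1 ≤ seqHeight 1 t i := by
  intro i
  induction i with
  | zero => intro _; rw [seqHeight_zero]
  | succ i ih =>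
    intro hi
    have hii : i < N := by omega
    have h1 : 1 ≤ seqHeight 1 t i := ih (by omega)
    have hstep := mem_stepSeqs ht ⟨i, hii⟩
    have hsucc := seqHeight_succ 1 t hii
    have hne' := hne (i+1) hi
    rcases hstep with he | he | he <;> omega

lemma ruinU_one_succ {a b c : ℝ} (habc : a + b + c = 1) (N : ℕ) :
    ruinU a b c 1 (N+1) = ruinU a b c 1 N + ruinP a b c (N+2) := by
  have hP : ruinP a b c (N+2)
      = ∑ s ∈ (stepSeqs (N+1)).filter
          (fun s => (∀ i ≤ N, 1 ≤ seqHeight 1 s i) ∧ seqHeight 1 s (N+1) = 0),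
        seqWeight a b c s := by
    rw [ruinP, if_pos (by omega)]
    rfl
  have L : ruinU a b c 1 (N+1) = ∑ t ∈ stepSeqs N, ∑ x ∈ ({1,0,-1} : Finset ℤ),
      (if ∃ i ≤ N+1, seqHeight 1 (Fin.snoc t x) i = 0 then seqWeight a b c (Fin.snoc t x) else 0) := by
    rw [ruinU, Finset.sum_filter, sum_stepSeqs_snoc, Finset.sum_comm]
  have R1 : ruinU a b c 1 N = ∑ t ∈ stepSeqs N,
      (if ∃ i ≤ N, seqHeight 1 t i = 0 then seqWeight a b c t else 0) := by
    rw [ruinU, Finset.sum_filter]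
  have R2 : ruinP a b c (N+2) = ∑ t ∈ stepSeqs N, ∑ x ∈ ({1,0,-1} : Finset ℤ),
      (if (∀ i ≤ N, 1 ≤ seqHeight 1 (Fin.snoc t x) i) ∧ seqHeight 1 (Fin.snoc t x) (N+1) = 0
        then seqWeight a b c (Fin.snoc t x) else 0) := by
    rw [hP, Finset.sum_filter, sum_stepSeqs_snoc, Finset.sum_comm]
  rw [L, R1, R2, ← Finset.sum_add_distrib]
  refine Finset.sum_congr rfl ?_
  intro t ht
  have key : ∀ x ∈ ({1,0,-1} : Finset ℤ),
      (if ∃ i ≤ N+1, seqHeight 1 (Fin.snoc t x) i = 0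
        then seqWeight a b c (Fin.snoc t x) else 0)
      = (if (∃ i ≤ N, seqHeight 1 t i = 0) ∨ seqHeight 1 t N + x = 0
          then stepw a b c x * seqWeight a b c t else 0) := by
    intro x hx
    have hx' : x = 1 ∨ x = 0 ∨ x = -1 := by simpa using hx
    have hiff : (∃ i ≤ N+1, seqHeight 1 (Fin.snoc t x) i = 0)
        ↔ ((∃ i ≤ N, seqHeight 1 t i = 0) ∨ seqHeight 1 t N + x = 0) := by
      constructor
      · rintro ⟨i, hi, he⟩
        rcases Nat.lt_or_ge i (N+1) with hlt | hge
        · rw [seqHeight_snoc_of_le 1 x t (by omega)] at he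
          exact Or.inl ⟨i, by omega, he⟩
        · have : i = N+1 := by omega
          subst this
          rw [seqHeight_snoc_last] at he
          exact Or.inr he
      · rintro (⟨i, hi, he⟩ | he)
        · exact ⟨i, by omega, by rw [seqHeight_snoc_of_le 1 x t hi]; exact he⟩
        · exact ⟨N+1, le_refl _, by rw [seqHeight_snoc_last]; exact he⟩
    by_cases hc : (∃ i ≤ N, seqHeight 1 t i = 0) ∨ seqHeight 1 t N + x = 0
    · rw [if_pos (hiff.mpr hc), if_pos hc, seqWeight_snoc hx']
    · rw [if_neg (fun hq => hc (hiff.mp hq)), if_neg hc]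
  have key2 : ∀ x ∈ ({1,0,-1} : Finset ℤ),
      (if (∀ i ≤ N, 1 ≤ seqHeight 1 (Fin.snoc t x) i) ∧ seqHeight 1 (Fin.snoc t x) (N+1) = 0
        then seqWeight a b c (Fin.snoc t x) else 0)
      = (if (¬ ∃ i ≤ N, seqHeight 1 t i = 0) ∧ seqHeight 1 t N + x = 0
          then stepw a b c x * seqWeight a b c t else 0) := by
    intro x hx
    have hx' : x = 1 ∨ x = 0 ∨ x = -1 := by simpa using hx
    have hiff : ((∀ i ≤ N, 1 ≤ seqHeight 1 (Fin.snoc t x) i) ∧ seqHeight 1 (Fin.snoc t x) (N+1) = 0)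
        ↔ ((¬ ∃ i ≤ N, seqHeight 1 t i = 0) ∧ seqHeight 1 t N + x = 0) := by
      rw [seqHeight_snoc_last]
      constructor
      · rintro ⟨hall, hlast⟩
        refine ⟨?_, hlast⟩
        rintro ⟨i, hi, he⟩
        have := hall i hi
        rw [seqHeight_snoc_of_le 1 x t hi] at this
        omega
      · rintro ⟨hne, hlast⟩
        refine ⟨?_, hlast⟩
        intro i hi
        rw [seqHeight_snoc_of_le 1 x t hi]
        exact heights_pos ht (fun j hj hj0 => hne ⟨j, hj, hj0⟩) i hi
    by_cases hc : (¬ ∃ i ≤ N, seqHeight 1 t i = 0) ∧ seqHeight 1 t N + x = 0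
    · rw [if_pos (hiff.mpr hc), if_pos hc, seqWeight_snoc hx']
    · rw [if_neg (fun hq => hc (hiff.mp hq)), if_neg hc]
  rw [Finset.sum_congr rfl key, Finset.sum_congr rfl key2]
  by_cases hA : ∃ i ≤ N, seqHeight 1 t i = 0
  · have l1 : ∀ x ∈ ({1,0,-1} : Finset ℤ),
        (if (∃ i ≤ N, seqHeight 1 t i = 0) ∨ seqHeight 1 t N + x = 0
          then stepw a b c x * seqWeight a b c t else 0) = stepw a b c x * seqWeight a b c t :=
      fun x _ => if_pos (Or.inl hA)
    have l2 : ∀ x ∈ ({1,0,-1} : Finset ℤ),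
        (if (¬ ∃ i ≤ N, seqHeight 1 t i = 0) ∧ seqHeight 1 t N + x = 0
          then stepw a b c x * seqWeight a b c t else 0) = 0 :=
      fun x _ => if_neg (fun hq => hq.1 hA)
    rw [Finset.sum_congr rfl l1, Finset.sum_congr rfl l2, if_pos hA, ← Finset.sum_mul, sum_stepw,
      habc, one_mul, Finset.sum_const, smul_zero, add_zero]
  · have l1 : ∀ x ∈ ({1,0,-1} : Finset ℤ),
        (if (∃ i ≤ N, seqHeight 1 t i = 0) ∨ seqHeight 1 t N + x = 0
          then stepw a b c x * seqWeight a b c t else 0)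
        = (if (¬ ∃ i ≤ N, seqHeight 1 t i = 0) ∧ seqHeight 1 t N + x = 0
          then stepw a b c x * seqWeight a b c t else 0) := by
      intro x _
      by_cases hB : seqHeight 1 t N + x = 0
      · rw [if_pos (Or.inr hB), if_pos ⟨hA, hB⟩]
      · rw [if_neg (fun hq => hq.elim hA hB), if_neg (fun hq => hB hq.2)]
    rw [Finset.sum_congr rfl l1, if_neg hA, zero_add]

lemma ruinP_nonneg {a b c : ℝ} (ha : 0 ≤ a) (hb : 0 ≤ b) (hc : 0 ≤ c) (n : ℕ) :
    0 ≤ ruinP a b c n := by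
  unfold ruinP
  split
  · exact Finset.sum_nonneg fun s _ => seqWeight_nonneg ha hb hc s
  · exact le_refl 0

lemma partial_sum_eq {a b c : ℝ} (habc : a + b + c = 1) (N : ℕ) :
    ∑ n ∈ Finset.range (N+2), ruinP a b c n = ruinU a b c 1 N := by
  induction N with
  | zero =>
    rw [Finset.sum_range_succ, Finset.sum_range_one]
    rw [show ruinP a b c 0 = 0 from if_neg (by omega),
      show ruinP a b c 1 = 0 from if_neg (by omega),
      ruinU_zero_steps one_ne_zero, add_zero]
  | succ N ih =>
    rw [Finset.sum_range_succ, ih, ruinU_one_succ habc]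

/-- the total ruin probability is `min(a,c)/a`: it is `1` when `a ≤ c`
and `c/a` when `a > c`. -/
theorem total_ruin_probability (a b c : ℝ) (ha : 0 < a) (hb : 0 < b) (hc : 0 < c)
    (habc : a + b + c = 1) :
    ∑' n : ℕ, ruinP a b c n = min a c / a := by
  have hq0 : 0 ≤ c / a := div_nonneg hc.le ha.le
  have hbdd : ∀ h : ℤ, ∀ N, ruinU a b c h N ≤ 1 := ruinU_le_one ha.le hb.le hc.le habc
  have hnn : ∀ h : ℤ, ∀ N, 0 ≤ ruinU a b c h N := fun h N => ruinU_nonneg ha.le hb.le hc.le h N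
  have hmono : ∀ h : ℤ, 0 ≤ h → Monotone (fun N => ruinU a b c h N) := fun h h0 =>
    monotone_nat_of_le_succ (fun N => ruinU_mono ha.le hb.le hc.le habc N h h0)
  set v : ℕ → ℝ := fun h => ⨆ N, ruinU a b c (h:ℤ) N with hv
  have hba : ∀ h : ℕ, BddAbove (Set.range (fun N => ruinU a b c (h:ℤ) N)) := by
    intro h
    refine ⟨1, ?_⟩
    rintro y ⟨N, rfl⟩
    exact hbdd _ N
  have hvt : ∀ h : ℕ, Tendsto (fun N => ruinU a b c (h:ℤ) N) atTop (nhds (v h)) :=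
    fun h => tendsto_atTop_ciSup (hmono (h:ℤ) (by positivity)) (hba h)
  have hv0 : v 0 = 1 := by
    have h1 : ∀ N, ruinU a b c ((0:ℕ):ℤ) N = 1 := fun N => by
      rw [Nat.cast_zero]; exact ruinU_zero habc N
    rw [hv]
    simp only [h1]
    exact ciSup_const
  have hvle : ∀ h : ℕ, v h ≤ (c/a)^h :=
    fun h => ciSup_le (fun N => ruinU_le_q ha hb.le hc.le habc N h)
  have hvnn : ∀ h : ℕ, 0 ≤ v h :=
    fun h => le_trans (hnn (h:ℤ) 0) (le_ciSup (hba h) 0)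
  have hvle1 : ∀ h : ℕ, v h ≤ 1 := fun h => ciSup_le (fun N => hbdd _ N)
  have hvrec : ∀ h : ℕ, v (h+1) = a * v (h+2) + b * v (h+1) + c * v h := by
    intro h
    have t1 : Tendsto (fun N => ruinU a b c ((h+1:ℕ):ℤ) (N+1)) atTop (nhds (v (h+1))) :=
      (hvt (h+1)).comp (tendsto_add_atTop_nat 1)
    have t2 : Tendsto (fun N => a * ruinU a b c ((h+2:ℕ):ℤ) N + b * ruinU a b c ((h+1:ℕ):ℤ) N
        + c * ruinU a b c ((h:ℕ):ℤ) N) atTop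
        (nhds (a * v (h+2) + b * v (h+1) + c * v h)) :=
      (((hvt (h+2)).const_mul a).add ((hvt (h+1)).const_mul b)).add ((hvt h).const_mul c)
    have heq : (fun N => ruinU a b c ((h+1:ℕ):ℤ) (N+1))
        = (fun N => a * ruinU a b c ((h+2:ℕ):ℤ) N + b * ruinU a b c ((h+1:ℕ):ℤ) N
            + c * ruinU a b c ((h:ℕ):ℤ) N) := by
      funext N
      rw [ruinU_rec (show ((h+1:ℕ):ℤ) ≠ 0 by positivity) N,
        show ((h+1:ℕ):ℤ)+1 = ((h+2:ℕ):ℤ) by push_cast; ring,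
        show ((h+1:ℕ):ℤ)-1 = ((h:ℕ):ℤ) by push_cast; ring]
    rw [heq] at t1
    exact tendsto_nhds_unique t1 t2
  have hd : ∀ h : ℕ, v (h+1) - v h = (c/a)^h * (v 1 - 1) := by
    intro h
    induction h with
    | zero => rw [pow_zero, one_mul, hv0]
    | succ h ih =>
      have key : a * (v (h+2) - v (h+1)) = c * (v (h+1) - v h) := by
        linear_combination -(hvrec h) - v (h+1) * habc
      have step : v (h+2) - v (h+1) = (c/a) * (v (h+1) - v h) := by
        rw [div_mul_eq_mul_div, eq_div_iff ha.ne']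
        linarith [key]
      rw [step, ih, pow_succ]
      ring
  have hsum : ∀ h : ℕ, v h = 1 + (v 1 - 1) * ∑ k ∈ Finset.range h, (c/a)^k := by
    intro h
    induction h with
    | zero => rw [hv0]; simp
    | succ h ih =>
      have := hd h
      rw [Finset.sum_range_succ]
      have hstep : v (h+1) = v h + (c/a)^h * (v 1 - 1) := by linarith
      rw [hstep, ih]
      ring
  -- the value of v 1
  have hv1 : v 1 = min a c / a := by
    rcases le_or_gt a c with hle | hlt
    · -- ruin probability 1
      have hmin : min a c = a := min_eq_left hle
      rw [hmin, div_self ha.ne']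
      have hq1 : 1 ≤ c/a := (one_le_div ha).2 hle
      have hgea : ∀ h : ℕ, (h:ℝ) ≤ ∑ k ∈ Finset.range h, (c/a)^k := by
        intro h
        calc (h:ℝ) = ∑ k ∈ Finset.range h, 1 := by simp
        _ ≤ ∑ k ∈ Finset.range h, (c/a)^k :=
          Finset.sum_le_sum (fun k _ => one_le_pow₀ hq1)
      have hd0 : v 1 - 1 = 0 := by
        by_contra hne
        have habs : 0 < |v 1 - 1| := abs_pos.2 hne
        obtain ⟨n, hn⟩ := exists_nat_gt (1 / |v 1 - 1|)
        have h1 : |v 1 - 1| * n ≤ 1 := by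
          have e1 : |v n - 1| ≤ 1 := by
            rw [abs_le]
            constructor <;> [linarith [hvnn n]; linarith [hvle1 n]]
          have e2 : |v n - 1| = |v 1 - 1| * ∑ k ∈ Finset.range n, (c/a)^k := by
            rw [hsum n]
            rw [show (1:ℝ) + (v 1 - 1) * ∑ k ∈ Finset.range n, (c/a)^k - 1
              = (v 1 - 1) * ∑ k ∈ Finset.range n, (c/a)^k by ring]
            rw [abs_mul]
            congr 1
            exact abs_of_nonneg (Finset.sum_nonneg fun k _ => pow_nonneg hq0 k)
          calc |v 1 - 1| * n ≤ |v 1 - 1| * ∑ k ∈ Finset.range n, (c/a)^k :=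
                mul_le_mul_of_nonneg_left (hgea n) (abs_nonneg _)
          _ = |v n - 1| := e2.symm
          _ ≤ 1 := e1
        have h2 : 1 < |v 1 - 1| * n := by
          rw [div_lt_iff₀ habs] at hn
          linarith
        linarith
      linarith
    · -- a > c : ruin probability c/a
      have hmin : min a c = c := min_eq_right hlt.le
      rw [hmin]
      have hq1 : c/a < 1 := (div_lt_one ha).2 hlt
      have hgeom : Tendsto (fun h : ℕ => ∑ k ∈ Finset.range h, (c/a)^k) atTop
          (nhds (1 - c/a)⁻¹) := (hasSum_geometric_of_lt_one hq0 hq1).tendsto_sum_nat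
      have hlim1 : Tendsto v atTop (nhds (1 + (v 1 - 1) * (1 - c/a)⁻¹)) := by
        have : Tendsto (fun h : ℕ => 1 + (v 1 - 1) * ∑ k ∈ Finset.range h, (c/a)^k) atTop
            (nhds (1 + (v 1 - 1) * (1 - c/a)⁻¹)) :=
          tendsto_const_nhds.add (hgeom.const_mul _)
        exact this.congr (fun h => (hsum h).symm)
      have hlim0 : Tendsto v atTop (nhds 0) := by
        have hp : Tendsto (fun h : ℕ => (c/a)^h) atTop (nhds 0) :=
          tendsto_pow_atTop_nhds_zero_of_lt_one hq0 hq1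
        exact squeeze_zero hvnn hvle hp
      have hzero : 1 + (v 1 - 1) * (1 - c/a)⁻¹ = 0 := tendsto_nhds_unique hlim1 hlim0
      have hac : a - c ≠ 0 := by linarith
      have hne : 1 - c/a ≠ 0 := by
        intro h0
        apply hac
        field_simp at h0
        linarith
      have h3 : (1 - c/a) + (v 1 - 1) = 0 := by
        have h2 : (1 + (v 1 - 1) * (1 - c/a)⁻¹) * (1 - c/a) = 0 := by rw [hzero]; ring
        rw [add_mul, one_mul, mul_assoc, inv_mul_cancel₀ hne, mul_one] at h2
        linarith
      have : v 1 = c/a := by linarith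
      linarith [this]
  -- tsum equals v 1
  have hsummable : Summable (ruinP a b c) := by
    apply summable_of_sum_range_le (c := 1) (fun n => ruinP_nonneg ha.le hb.le hc.le n)
    intro n
    calc ∑ i ∈ Finset.range n, ruinP a b c i
        ≤ ∑ i ∈ Finset.range (n+2), ruinP a b c i :=
          Finset.sum_le_sum_of_subset_of_nonneg (Finset.range_subset_range.2 (by omega))
            (fun i _ _ => ruinP_nonneg ha.le hb.le hc.le i)
      _ = ruinU a b c 1 n := partial_sum_eq habc n
      _ ≤ 1 := hbdd 1 n
  have ht1 : Tendsto (fun N => ∑ n ∈ Finset.range (N+2), ruinP a b c n) atTop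
      (nhds (∑' n : ℕ, ruinP a b c n)) :=
    hsummable.hasSum.tendsto_sum_nat.comp (tendsto_add_atTop_nat 2)
  have ht2 : Tendsto (fun N => ∑ n ∈ Finset.range (N+2), ruinP a b c n) atTop (nhds (v 1)) := by
    have := hvt 1
    rw [Nat.cast_one] at this
    exact this.congr (fun N => (partial_sum_eq habc N).symm)
  rw [tendsto_nhds_unique ht1 ht2, hv1]
end
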